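/- Let (Beh, B̂, êval, ⪰_B) be a behavior structure on a normalized gs-monoidal category C with distinguished objects T and C₀, and let ⪰ be the induced ambient imitation relation. Then for all f,g : A → T⊗C₀, f ⊒ g implies f ⪰ g (morphisms behaviorally imitate restrictions to their domain). -/

import Mathlib

open CategoryTheory MonoidalCategory

universe w v u v' u'

/-- A gs-monoidal category: a symmetric monoidal category in which every object carries a
commutative comonoid structure (copy and discard), compatible with tensor products. -/
class GSCat (C : Type u) [Category.{v} C] [MonoidalCategory C] [SymmetricCategory C] where
  copy : ∀ A : C, A ⟶ A ⊗ A
  discard : ∀ A : C, A ⟶ 𝟙_ C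
  copy_assoc : ∀ A : C, copy A ≫ (copy A ▷ A) ≫ (α_ A A A).hom = copy A ≫ (A ◁ copy A)
  copy_comm : ∀ A : C, copy A ≫ (β_ A A).hom = copy A
  copy_counit_left : ∀ A : C, copy A ≫ (discard A ▷ A) ≫ (λ_ A).hom = 𝟙 A
  copy_counit_right : ∀ A : C, copy A ≫ (A ◁ discard A) ≫ (ρ_ A).hom = 𝟙 A
  copy_tensor : ∀ A X : C, copy (A ⊗ X) = (copy A ⊗ₘ copy X) ≫ tensorμ A A X X
  discard_tensor : ∀ A X : C, discard (A ⊗ X) = (discard A ⊗ₘ discard X) ≫ (λ_ (𝟙_ C)).hom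
  discard_unit : discard (𝟙_ C) = 𝟙 (𝟙_ C)

variable {C : Type u} [Category.{v} C] [MonoidalCategory C] [SymmetricCategory C] [GSCat C]

/-- The domain `dom(f) = ρ_A ∘ (id_A ⊗ (ε_X ∘ f)) ∘ Δ_A` of a morphism `f : A ⟶ X`. -/
def gsDom {A X : C} (f : A ⟶ X) : A ⟶ A :=
  GSCat.copy A ≫ (A ◁ (f ≫ GSCat.discard X)) ≫ (ρ_ A).hom

/-- A morphism is normalized if `f ∘ dom(f) = f`. -/
def GsNormalized {A X : C} (f : A ⟶ X) : Prop := gsDom f ≫ f = f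

/-- A morphism is functional if `Δ_X ∘ f = (f ⊗ f) ∘ Δ_A`. -/
def GsFunctional {A X : C} (f : A ⟶ X) : Prop :=
  f ≫ GSCat.copy X = GSCat.copy A ≫ (f ⊗ₘ f)

/-- A morphism is total if `ε_X ∘ f = ε_A`. -/
def GsTotal {A X : C} (f : A ⟶ X) : Prop := f ≫ GSCat.discard X = GSCat.discard A

/-- `f ⊒ g` : `f` agrees with `g` on the domain of `g`, i.e. `f ∘ dom(g) = g`. -/
def GsRestrict {A X : C} (f g : A ⟶ X) : Prop := gsDom g ≫ f = g

/-- A gs-monoidal category is normalized if all of its morphisms are normalized. -/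
class GsNormalizedCat (C : Type u) [Category.{v} C] [MonoidalCategory C]
    [SymmetricCategory C] [GSCat C] : Prop where
  norm : ∀ {A X : C} (f : A ⟶ X), GsNormalized f

/-- Composition of set-valued relations (first `f`, then `g`). -/
def RComp {α β γ : Type*} (f : α → Set β) (g : β → Set γ) : α → Set γ :=
  fun a => {c | ∃ b ∈ f a, c ∈ g b}

/-- Existence of an enhancement map `U → V` with respect to `pre`
(read `pre x y` as "`x ⪰ y`"): a map sending each `u ∈ U` to an element of `V` above it. -/
def IsEnh {X : Type w} (pre : X → X → Prop) (U V : Set X) : Prop :=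
  ∃ e : U → V, ∀ u : U, pre (e u : X) (u : X)

/-- Existence of a degradation map `V → U`: a map sending each `v ∈ V` to an element of `U`
below it. -/
def IsDeg {X : Type w} (pre : X → X → Prop) (U V : Set X) : Prop :=
  ∃ d : V → U, ∀ v : V, pre (v : X) (d v : X)

/-- The imitation relation: `ν` imitates `μ` iff for every `a` in the domain of `μ` there are
an enhancement map `μ a → ν a` and a degradation map `ν a → μ a`. -/
def Imitates {α : Type*} {X : Type w} (pre : X → X → Prop) (ν μ : α → Set X) : Prop :=
  ∀ a : α, (μ a).Nonempty → IsEnh pre (μ a) (ν a) ∧ IsDeg pre (μ a) (ν a)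

/-- A behavior structure on a gs-monoidal category with distinguished objects `T`, `C0`:
a lax gs-monoidal functor `Beh` into the category `Rel` of sets and relations (encoded
concretely: `obj` on objects, set-valued `map` on morphisms, lax structure maps `unitSet`
(the relation `ψ₀`) and `mul` (the relations `ψ_{A,X}`) with the lax symmetric monoidal
coherences and compatibility with copy/discard), a set `Bhat` of behaviors, an evaluation
function `evalHat : Beh(T ⊗ C0) → Bhat` and a preorder `brel` on `Bhat`. -/
structure BehStr (C : Type u) [Category.{v} C] [MonoidalCategory C] [SymmetricCategory C]
    [GSCat C] (T C0 : C) (Bhat : Type w) where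
  obj : C → Type w
  map : ∀ {A X : C}, (A ⟶ X) → obj A → Set (obj X)
  map_id : ∀ {A : C} (a : obj A), map (𝟙 A) a = {a}
  map_comp : ∀ {A X Y : C} (f : A ⟶ X) (g : X ⟶ Y) (a : obj A),
    map (f ≫ g) a = {y | ∃ x ∈ map f a, y ∈ map g x}
  unitSet : Set (obj (𝟙_ C))
  mul : ∀ A X : C, obj A → obj X → Set (obj (A ⊗ X))
  mul_natural : ∀ {A A' X X' : C} (f : A ⟶ A') (g : X ⟶ X')
      (a : obj A) (x : obj X) (y : obj (A' ⊗ X')),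
    (∃ a' ∈ map f a, ∃ x' ∈ map g x, y ∈ mul A' X' a' x') ↔
      ∃ z ∈ mul A X a x, y ∈ map (f ⊗ₘ g) z
  mul_assoc : ∀ {A X Y : C} (a : obj A) (x : obj X) (y : obj Y) (u : obj (A ⊗ (X ⊗ Y))),
    (∃ z ∈ mul A X a x, ∃ v ∈ mul (A ⊗ X) Y z y, u ∈ map (α_ A X Y).hom v) ↔
      ∃ t ∈ mul X Y x y, u ∈ mul A (X ⊗ Y) a t
  mul_left_unit : ∀ {A : C} (a b : obj A),
    (∃ i ∈ unitSet, ∃ z ∈ mul (𝟙_ C) A i a, b ∈ map (λ_ A).hom z) ↔ b = a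
  mul_right_unit : ∀ {A : C} (a b : obj A),
    (∃ i ∈ unitSet, ∃ z ∈ mul A (𝟙_ C) a i, b ∈ map (ρ_ A).hom z) ↔ b = a
  mul_braiding : ∀ {A X : C} (a : obj A) (x : obj X) (u : obj (X ⊗ A)),
    (∃ z ∈ mul A X a x, u ∈ map (β_ A X).hom z) ↔ u ∈ mul X A x a
  map_copy : ∀ {A : C} (a : obj A), map (GSCat.copy A) a = mul A A a a
  map_discard : ∀ {A : C} (a : obj A), map (GSCat.discard A) a = unitSet
  evalHat : obj (T ⊗ C0) → Bhat
  brel : Bhat → Bhat → Prop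
  brel_refl : ∀ b : Bhat, brel b b
  brel_trans : ∀ {b₁ b₂ b₃ : Bhat}, brel b₁ b₂ → brel b₂ b₃ → brel b₁ b₃

/-- The ambient imitation relation induced by a behavior structure:
`f ⪰ g` iff `êval ∘ Beh(f)` imitates `êval ∘ Beh(g)`. -/
def BehStr.aim {T C0 : C} {Bhat : Type w} (β : BehStr C T C0 Bhat) {A : C}
    (f g : A ⟶ T ⊗ C0) : Prop :=
  Imitates β.brel (fun a => β.evalHat '' β.map f a) (fun a => β.evalHat '' β.map g a)

/-- For a behavior structure on a normalized gs-monoidal category, morphisms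
behaviorally imitate restrictions to their domain: `f ⊒ g` implies `f ⪰ g` for the induced
ambient imitation relation. -/
theorem beh_restriction [GsNormalizedCat C] {T C0 : C} {Bhat : Type w}
    (β : BehStr C T C0 Bhat) {A : C} (f g : A ⟶ T ⊗ C0)
    (h : GsRestrict f g) : β.aim f g := by
  intro a hne
  have hg : (β.map g a).Nonempty := hne.of_image
  obtain ⟨x₀, hx₀⟩ := hg
  have h1 : ∀ b ∈ β.map (gsDom g) a, b = a := by
    intro b hb
    simp only [gsDom, β.map_comp, Set.mem_setOf_eq] at hb
    obtain ⟨z, hz, w, hw, hb⟩ := hb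
    rw [β.map_copy] at hz
    have hw' : w ∈ β.map (𝟙 A ⊗ₘ (g ≫ GSCat.discard (T ⊗ C0))) z := by
      rwa [MonoidalCategory.id_tensorHom]
    obtain ⟨a', ha', i, hi, hwm⟩ :=
      (β.mul_natural (𝟙 A) (g ≫ GSCat.discard (T ⊗ C0)) a a w).2 ⟨z, hz, hw'⟩
    rw [β.map_id, Set.mem_singleton_iff] at ha'
    rw [β.map_comp] at hi
    obtain ⟨x, hx, hix⟩ := hi
    rw [β.map_discard] at hix
    rw [ha'] at hwm
    exact (β.mul_right_unit a b).1 ⟨i, hix, w, hwm, hb⟩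
  have h2 : a ∈ β.map (gsDom g) a := by
    obtain ⟨i, hi, w, hw, hb⟩ := (β.mul_right_unit a a).2 rfl
    have hi' : i ∈ β.map (g ≫ GSCat.discard (T ⊗ C0)) a := by
      rw [β.map_comp]
      exact ⟨x₀, hx₀, by rw [β.map_discard]; exact hi⟩
    obtain ⟨z, hz, hwz⟩ :=
      (β.mul_natural (𝟙 A) (g ≫ GSCat.discard (T ⊗ C0)) a a w).1
        ⟨a, by rw [β.map_id]; rfl, i, hi', hw⟩
    rw [← β.map_copy] at hz
    rw [MonoidalCategory.id_tensorHom] at hwz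
    simp only [gsDom, β.map_comp, Set.mem_setOf_eq]
    exact ⟨z, hz, w, hwz, hb⟩
  have hdom : β.map (gsDom g) a = {a} :=
    Set.eq_singleton_iff_unique_mem.2 ⟨h2, h1⟩
  have hmap : β.map f a = β.map g a := by
    conv_rhs => rw [← h]
    rw [β.map_comp, hdom]
    ext y
    simp
  have himg : β.evalHat '' β.map f a = β.evalHat '' β.map g a := by rw [hmap]
  constructor
  · refine ⟨fun u => ⟨u.1, ?_⟩, fun u => β.brel_refl _⟩
    show u.1 ∈ β.evalHat '' β.map f a
    rw [himg]; exact u.2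
  · refine ⟨fun v => ⟨v.1, ?_⟩, fun v => β.brel_refl _⟩
    show v.1 ∈ β.evalHat '' β.map g a
    rw [← himg]; exact v.2
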